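/- Let N = (V, A, c) be a network, y, z ∈ V distinct, and f a flow from y to z in N that is not a maximum flow. Then there exists an augmenting path for f from y to z in N and, for every augmenting path σ for f from y to z, the function f + χ_σ is a flow from y to z in N with value v(f + χ_σ) = v(f) + 1. -/

import Mathlib

/-!
Networks on the complete digraph: capacities `c : V → V → ℕ` with no loops
(arcs are ordered pairs of distinct vertices; loops are given capacity 0).
-/

structure Network (V : Type*) where
  c : V → V → ℕ
  no_loop : ∀ v, c v v = 0

namespace NetFlow

variable {V : Type*} [Fintype V] [DecidableEq V]

/-- `f` is a flow from `y` to `z` in `N`. -/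
def IsFlow (N : Network V) (y z : V) (f : V → V → ℕ) : Prop :=
  (∀ u v, f u v ≤ N.c u v) ∧
  (∀ x, x ≠ y → x ≠ z → ∑ u, f u x = ∑ u, f x u)

/-- The value of a flow from `y`. -/
def flowValue (f : V → V → ℕ) (y : V) : ℤ :=
  (∑ u, (f y u : ℤ)) - ∑ u, (f u y : ℤ)

/-- The maximum flow value `φ^N_{yz}`. -/
noncomputable def maxFlowValue (N : Network V) (y z : V) : ℕ :=
  sSup {m : ℕ | ∃ f, IsFlow N y z f ∧ flowValue f y = (m : ℤ)}

/-- `f` is a maximum flow from `y` to `z` in `N`. -/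
def IsMaxFlow (N : Network V) (y z : V) (f : V → V → ℕ) : Prop :=
  IsFlow N y z f ∧ flowValue f y = (maxFlowValue N y z : ℤ)

/-- The network `N_X`: capacities of arcs incident to `X` are set to zero. -/
def removeVerts (N : Network V) (X : Finset V) : Network V where
  c u v := if u ∈ X ∨ v ∈ X then 0 else N.c u v
  no_loop v := by simp [N.no_loop v]

/-- `φ^N_{yz}(X) = φ^N_{yz} - φ^{N_X}_{yz}`. -/
noncomputable def phiDrop (N : Network V) (y z : V) (X : Finset V) : ℤ :=
  (maxFlowValue N y z : ℤ) - (maxFlowValue (removeVerts N X) y z : ℤ)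

/-- The (consecutive) arcs of a list of vertices. -/
def pathArcs (p : List V) : List (V × V) := p.zip p.tail

/-- `p` is a path from `y` to `z` in `N`: at least two distinct vertices, starting at `y`,
ending at `z`, with all consecutive arcs of positive capacity. -/
def IsPath (N : Network V) (y z : V) (p : List V) : Prop :=
  2 ≤ p.length ∧ p.Nodup ∧ p.head? = some y ∧ p.getLast? = some z ∧
    p.Chain' fun u v => 1 ≤ N.c u v

/-- `p` is a cycle in `N`. -/
def IsCycle (N : Network V) (p : List V) : Prop :=
  3 ≤ p.length ∧ p.dropLast.Nodup ∧ p.head? = p.getLast? ∧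
    p.Chain' fun u v => 1 ≤ N.c u v

/-- A sequence of arc-disjoint paths from `y` to `z` in `N`: each component is a path, and
each arc `a` is used by at most `c a` components. -/
def IsPathSeq (N : Network V) (y z : V) (γ : List (List V)) : Prop :=
  (∀ p ∈ γ, IsPath N y z p) ∧
  ∀ u v : V, γ.countP (fun p => decide ((u, v) ∈ pathArcs p)) ≤ N.c u v

/-- `λ^N_{yz}`: the maximum length of a sequence of arc-disjoint paths from `y` to `z`. -/
noncomputable def maxSeqLen (N : Network V) (y z : V) : ℕ :=
  sSup {m : ℕ | ∃ γ : List (List V), IsPathSeq N y z γ ∧ γ.length = m}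

/-- `M^N_{yz}`: the sequences of arc-disjoint paths from `y` to `z` of maximum length. -/
def MaxSeqs (N : Network V) (y z : V) : Set (List (List V)) :=
  {γ | IsPathSeq N y z γ ∧ γ.length = maxSeqLen N y z}

/-- `l_X(γ)`: the number of components of `γ` having a vertex in `X`. -/
def lX (X : Finset V) (γ : List (List V)) : ℕ :=
  γ.countP fun p => p.any fun x => decide (x ∈ X)

/-- `λ^N_{yz}(X)`: the minimum of `l_X` over maximum-length sequences of arc-disjoint paths. -/
noncomputable def lambdaX (N : Network V) (y z : V) (X : Finset V) : ℕ :=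
  sInf {n : ℕ | ∃ γ ∈ MaxSeqs N y z, lX X γ = n}

/-- The flow through a vertex: `f(x) = Σ_{a exiting x} f(a)` if `x ∉ {y,z}`, `v(f)` otherwise. -/
def vertexFlow (f : V → V → ℕ) (y z x : V) : ℤ :=
  if x = y ∨ x = z then flowValue f y else ∑ u, (f x u : ℤ)

/-- `δ^N_{yz}(X)`: the minimum of `f(X) = Σ_{x∈X} f(x)` over maximum flows `f`. -/
noncomputable def deltaX (N : Network V) (y z : V) (X : Finset V) : ℕ :=
  sInf {n : ℕ | ∃ f, IsMaxFlow N y z f ∧ (∑ x ∈ X, vertexFlow f y z x) = (n : ℤ)}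

/-- The flow `f_γ` associated with a sequence of arc-disjoint paths. -/
def seqFlow (γ : List (List V)) (u v : V) : ℕ :=
  γ.countP fun p => decide ((u, v) ∈ pathArcs p)

/-- The path (or cycle) function `χ_p` of a path or cycle `p`. -/
def chi (p : List V) (u v : V) : ℕ := (pathArcs p).count (u, v)

/-- `(γ, w)` is a decomposition of the flow `f`: `γ` is a sequence of `v(f)` paths from `y`
to `z`, `w` a sequence of cycles, and `f = Σ_j χ_{γ_j} + Σ_j χ_{w_j}`. -/
def IsDecomposition (N : Network V) (y z : V) (f : V → V → ℕ)
    (γ w : List (List V)) : Prop :=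
  (∀ p ∈ γ, IsPath N y z p) ∧ (∀ q ∈ w, IsCycle N q) ∧
  (γ.length : ℤ) = flowValue f y ∧
  ∀ u v : V, f u v = (γ.map fun p => chi p u v).sum + (w.map fun q => chi q u v).sum

/-- The forward arcs of a generalized path given by vertices `p` and directions `d`. -/
def forwardArcs (p : List V) (d : List Bool) : List (V × V) :=
  ((p.zip p.tail).zip d).filterMap fun e => if e.2 then some e.1 else none

/-- The backward arcs of a generalized path given by vertices `p` and directions `d`. -/
def backwardArcs (p : List V) (d : List Bool) : List (V × V) :=
  ((p.zip p.tail).zip d).filterMap fun e => if e.2 then none else some (e.1.2, e.1.1)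

/-- `(p, d)` is a generalized path from `y` to `z`: distinct vertices `x_1 = y, …, x_m = z`
(`m ≥ 2`), the `i`-th arc being `(x_i, x_{i+1})` (forward, `d_i = true`) or `(x_{i+1}, x_i)`
(backward, `d_i = false`). -/
def IsGenPath (y z : V) (p : List V) (d : List Bool) : Prop :=
  2 ≤ p.length ∧ p.Nodup ∧ p.head? = some y ∧ p.getLast? = some z ∧
    d.length + 1 = p.length

/-- `(p, d)` is an augmenting path for `f` from `y` to `z` in `N`. -/
def IsAugPath (N : Network V) (y z : V) (f : V → V → ℕ)
    (p : List V) (d : List Bool) : Prop :=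
  IsGenPath y z p d ∧
  (∀ a ∈ forwardArcs p d, f a.1 a.2 < N.c a.1 a.2) ∧
  (∀ a ∈ backwardArcs p d, 1 ≤ f a.1 a.2)

/-- `χ_σ` for a generalized path `σ = (p, d)`: `+1` on forward arcs, `-1` on backward arcs. -/
def chiGen (p : List V) (d : List Bool) (u v : V) : ℤ :=
  ((forwardArcs p d).count (u, v) : ℤ) - ((backwardArcs p d).count (u, v) : ℤ)

/-- The full flow vitality group centrality measure `φ^N(X)`. -/
noncomputable def phiGC (N : Network V) (X : Finset V) : ℝ :=
  ∑ a ∈ Finset.univ.filter (fun a : V × V => a.1 ≠ a.2 ∧ 0 < maxFlowValue N a.1 a.2),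
    (phiDrop N a.1 a.2 X : ℝ) / (maxFlowValue N a.1 a.2 : ℝ)

/-- The full flow betweenness group centrality measure `λ^N(X)`. -/
noncomputable def lambdaGC (N : Network V) (X : Finset V) : ℝ :=
  ∑ a ∈ Finset.univ.filter (fun a : V × V => a.1 ≠ a.2 ∧ 0 < maxFlowValue N a.1 a.2),
    (lambdaX N a.1 a.2 X : ℝ) / (maxFlowValue N a.1 a.2 : ℝ)

theorem chain'_pathArcs {r : V → V → Prop} : ∀ {p : List V}, p.Chain' r →
    ∀ a ∈ pathArcs p, r a.1 a.2 := by
  intro p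
  induction p with
  | nil => simp [pathArcs]
  | cons x rest ih =>
    cases rest with
    | nil => simp [pathArcs]
    | cons v rest' =>
      intro h a ha
      rcases List.isChain_cons_cons.mp h with ⟨h1, h2⟩
      simp only [pathArcs, List.zip_cons_cons, List.tail_cons, List.mem_cons] at ha
      rcases ha with rfl | ha
      · exact h1
      · exact ih h2 a ha

theorem count_le_one_of_nodup {α : Type*} [BEq α] [LawfulBEq α] :
    ∀ {l : List α}, l.Nodup → ∀ a : α, l.count a ≤ 1 := by
  intro l
  induction l with
  | nil => simp
  | cons b t ih =>
    intro h a
    rcases List.nodup_cons.mp h with ⟨hb, ht⟩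
    rw [List.count_cons]
    by_cases hab : a = b
    · subst hab
      have : t.count a = 0 := List.count_eq_zero.mpr hb
      simp [this]
    · have := ih ht a
      split_ifs with h
      · exact absurd (eq_of_beq h).symm hab
      · omega

theorem count_fwd_le (a : V × V) : ∀ (l : List (V × V)) (d : List Bool),
    ((l.zip d).filterMap fun e => if e.2 then some e.1 else none).count a ≤ l.count a := by
  intro l
  induction l with
  | nil => simp
  | cons b t ih =>
    intro d
    cases d with
    | nil => simp
    | cons c d' =>
      have hh := ih d'
      simp only [List.zip_cons_cons, List.filterMap_cons]
      cases c <;> norm_num [List.count_cons] <;> omega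

theorem count_bwd_le (u w : V) : ∀ (l : List (V × V)) (d : List Bool),
    ((l.zip d).filterMap fun e => if e.2 then none else some (e.1.2, e.1.1)).count (u, w)
      ≤ l.count (w, u) := by
  intro l
  induction l with
  | nil => simp
  | cons b t ih =>
    intro d
    cases d with
    | nil => simp
    | cons c d' =>
      have hh := ih d'
      obtain ⟨b1, b2⟩ := b
      simp only [List.zip_cons_cons, List.filterMap_cons]
      cases c <;> norm_num [List.count_cons]
      · split_ifs with h1 h2 h3 <;> try omega
        first
        | exact absurd ⟨h1.2, h1.1⟩ h2
        | exact absurd ⟨h3.2, h3.1⟩ h1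
      · omega

theorem pathArcs_nodup {p : List V} (h : p.Nodup) : (pathArcs p).Nodup := by
  have hm : (pathArcs p).map Prod.snd = p.tail :=
    List.map_snd_zip (by cases p <;> simp)
  have : (p.tail).Nodup := h.sublist (List.tail_sublist p)
  rw [← hm] at this
  exact this.of_map _

theorem count_forwardArcs_le_one {p : List V} (hp : p.Nodup) (d : List Bool) (a : V × V) :
    (forwardArcs p d).count a ≤ 1 :=
  le_trans (count_fwd_le a _ d)
    (count_le_one_of_nodup (pathArcs_nodup hp) a)

theorem count_backwardArcs_le_one {p : List V} (hp : p.Nodup) (d : List Bool) (u w : V) :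
    (backwardArcs p d).count (u, w) ≤ 1 :=
  le_trans (count_bwd_le u w _ d)
    (count_le_one_of_nodup (pathArcs_nodup hp) _)


theorem forwardArcs_cons (x v : V) (rest : List V) (b : Bool) (d : List Bool) :
    forwardArcs (x :: v :: rest) (b :: d) =
      (if b then [(x, v)] else []) ++ forwardArcs (v :: rest) d := by
  cases b <;> simp [forwardArcs, List.zip_cons_cons, List.filterMap_cons]

theorem backwardArcs_cons (x v : V) (rest : List V) (b : Bool) (d : List Bool) :
    backwardArcs (x :: v :: rest) (b :: d) =
      (if b then [] else [(v, x)]) ++ backwardArcs (v :: rest) d := by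
  cases b <;> simp [backwardArcs, List.zip_cons_cons, List.filterMap_cons]

theorem chiGen_cons (x v : V) (rest : List V) (b : Bool) (d : List Bool) (u w : V) :
    chiGen (x :: v :: rest) (b :: d) u w =
      (if b then (if (u, w) = (x, v) then 1 else 0)
       else (if (u, w) = (v, x) then -1 else 0)) + chiGen (v :: rest) d u w := by
  have hcnt : ∀ (e : V × V) (l : List (V × V)),
      ((e :: l).count (u, w) : ℤ) = (l.count (u, w) : ℤ) + (if (u, w) = e then 1 else 0) := by
    intro e l
    rw [List.count_cons]
    by_cases h : (u, w) = e
    · simp [h]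
    · simp [h, Ne.symm h]
  cases b
  · simp only [chiGen, forwardArcs_cons, backwardArcs_cons, Bool.false_eq_true, if_false,
      List.nil_append, List.singleton_append]
    rw [hcnt]
    split_ifs <;> push_cast <;> ring
  · simp only [chiGen, forwardArcs_cons, backwardArcs_cons, if_true,
      List.nil_append, List.singleton_append]
    rw [hcnt]
    split_ifs <;> push_cast <;> ring

theorem sum_chiGen_single (x v u : V) (c : ℤ) :
    (∑ w : V, (if ((u, w) : V × V) = (x, v) then c else 0)) = if u = x then c else 0 := by
  by_cases h : u = x
  · subst h
    rw [Finset.sum_eq_single v]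
    · simp
    · intro w _ hw; simp [Prod.ext_iff, hw]
    · simp
  · simp only [Prod.mk.injEq]
    rw [Finset.sum_eq_zero]
    · simp [h]
    · intro w _; simp [h]

theorem sum_chiGen_single' (x v w : V) (c : ℤ) :
    (∑ u : V, (if ((u, w) : V × V) = (x, v) then c else 0)) = if w = v then c else 0 := by
  by_cases h : w = v
  · subst h
    rw [Finset.sum_eq_single x]
    · simp
    · intro u _ hu; simp [Prod.ext_iff, hu]
    · simp
  · simp only [Prod.mk.injEq]
    rw [Finset.sum_eq_zero]
    · simp [h]
    · intro u _; simp [h]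


theorem chiGen_singleton (a u w : V) : chiGen [a] [] u w = 0 := by
  simp [chiGen, forwardArcs, backwardArcs]

theorem sum_chiGen_net :
    ∀ (d : List Bool) (p : List V), p.Nodup → d.length + 1 = p.length →
    ∀ x : V, (∑ u, chiGen p d x u) - (∑ u, chiGen p d u x) =
      (if x ∈ p.dropLast then (1:ℤ) else 0) - (if x ∈ p.tail then (1:ℤ) else 0) := by
  intro d
  induction d with
  | nil =>
    intro p hp hl x
    obtain ⟨a, rfl⟩ := List.length_eq_one_iff.mp (by simp at hl; omega : p.length = 1)
    simp [chiGen_singleton]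
  | cons b d ih =>
    intro p hp hl x
    obtain ⟨a, v, rest, rfl⟩ : ∃ a v rest, p = a :: v :: rest := by
      rcases p with _ | ⟨a, _ | ⟨v, rest⟩⟩
      · simp at hl
      · simp at hl
      · exact ⟨a, v, rest, rfl⟩
    have hnd2 : (v :: rest).Nodup := hp.of_cons
    have ha : a ∉ v :: rest := (List.nodup_cons.mp hp).1
    have hv : v ∉ rest := (List.nodup_cons.mp hnd2).1
    have key := ih (v :: rest) hnd2 (by simpa using hl) x
    have e1 : ∀ wz : V, (∑ u, chiGen (a :: v :: rest) (b :: d) wz u)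
        = (if b then (if wz = a then (1:ℤ) else 0) else (if wz = v then (-1:ℤ) else 0))
          + ∑ u, chiGen (v :: rest) d wz u := by
      intro wz
      rw [Finset.sum_congr rfl fun u _ => chiGen_cons a v rest b d wz u,
        Finset.sum_add_distrib]
      congr 1
      cases b
      · simpa using sum_chiGen_single v a wz (-1)
      · simpa using sum_chiGen_single a v wz 1
    have e2 : ∀ wz : V, (∑ u, chiGen (a :: v :: rest) (b :: d) u wz)
        = (if b then (if wz = v then (1:ℤ) else 0) else (if wz = a then (-1:ℤ) else 0))
          + ∑ u, chiGen (v :: rest) d u wz := by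
      intro wz
      rw [Finset.sum_congr rfl fun u _ => chiGen_cons a v rest b d u wz,
        Finset.sum_add_distrib]
      congr 1
      cases b
      · simpa using sum_chiGen_single' v a wz (-1)
      · simpa using sum_chiGen_single' a v wz 1
    rw [e1 x, e2 x]
    have hdl : (a :: v :: rest).dropLast = a :: (v :: rest).dropLast := by
      simp
    have hdl2 : ∀ t : V, t ∈ (v :: rest).dropLast → t ∈ v :: rest := fun t ht =>
      (List.dropLast_sublist _).mem ht
    rw [hdl]
    by_cases hxa : x = a <;> by_cases hxv : x = v
    · subst hxa
      exact absurd (by rw [hxv]; exact List.mem_cons_self) ha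
    · subst hxa
      have h2 : x ∉ (v :: rest).dropLast := fun h => ha (hdl2 x h)
      have h3 : x ∉ rest := fun h => ha (List.mem_cons_of_mem v h)
      have h4 : x ≠ v := fun h => ha (h ▸ (List.mem_cons_self : v ∈ v :: rest))
      cases b <;> simp [hxv, h2, h3, h4] at key ⊢ <;> linarith [key]
    · have h1 : x ∈ v :: rest := hxv ▸ (List.mem_cons_self : v ∈ v :: rest)
      have h3 : x ∉ rest := hxv ▸ hv
      have h4 : ¬ v = a := fun h => ha (h ▸ (List.mem_cons_self : v ∈ v :: rest))
      subst hxv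
      by_cases hm : x ∈ (x :: rest).dropLast <;>
        cases b <;> simp [hxa, h4, hv, hm] at key ⊢ <;> linarith [key]
    · by_cases hm : x ∈ (v :: rest).dropLast <;> by_cases hr : x ∈ rest <;>
        cases b <;> simp [hxa, hxv, hm, hr] at key ⊢ <;> omega

theorem exists_nodup_chain {r : V → V → Prop} {y x : V} (h : Relation.ReflTransGen r y x) :
    ∃ p : List V, p.Nodup ∧ p.head? = some y ∧ p.getLast? = some x ∧ p.Chain' r := by
  induction h with
  | refl => exact ⟨[y], by simp, by simp, by simp, List.isChain_singleton y⟩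
  | @tail b c hab hbc ih =>
    obtain ⟨p, hnd, hh, hl, hc⟩ := ih
    obtain ⟨q, t, rfl⟩ : ∃ q t, p = q :: t := by
      cases p
      · simp at hh
      · exact ⟨_, _, rfl⟩
    by_cases hcp : c ∈ q :: t
    · set p := q :: t with hpdef
      set i := p.idxOf c with hidef
      have hi : i < p.length := List.idxOf_lt_length_iff.mpr hcp
      refine ⟨p.take (i + 1), hnd.sublist (List.take_sublist _ _), ?_, ?_, hc.take _⟩
      · rw [hpdef, List.take_succ_cons]
        rw [hpdef] at hh
        simpa using hh
      · rw [List.getLast?_eq_getElem?]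
        have hlen : (p.take (i + 1)).length = i + 1 := by
          rw [List.length_take]; omega
        rw [hlen]
        simp only [Nat.add_sub_cancel]
        rw [List.getElem?_take]
        rw [if_pos (by omega), List.getElem?_eq_getElem hi]
        simp [hidef, List.getElem_idxOf]
    · refine ⟨(q :: t) ++ [c], ?_, ?_, List.getLast?_concat, ?_⟩
      · simp only [List.nodup_append]
        exact ⟨hnd, List.nodup_singleton c, by intro a ha b hb; simp at hb; subst hb; rintro rfl; exact hcp ha⟩
      · rw [List.head?_append_of_ne_nil _ (by simp)]
        exact hh
      · show List.IsChain r _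
        rw [List.isChain_append]
        refine ⟨hc, List.isChain_singleton c, ?_⟩
        intro a ha' b' hb'
        rw [hl] at ha'
        simp only [Option.mem_def, Option.some.injEq, List.head?_cons] at ha' hb'
        rw [← ha', ← hb']
        exact hbc

theorem zip_map_self {α β : Type*} (g : α → β) :
    ∀ l : List α, l.zip (l.map g) = l.map fun x => (x, g x) := by
  intro l
  induction l with
  | nil => simp
  | cons a t ih => simp [ih]

theorem flowValue_eq_cut (N : Network V) (y z : V) (g : V → V → ℕ) (hg : IsFlow N y z g)
    (S : Finset V) (hy : y ∈ S) (hz : z ∉ S) :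
    flowValue g y = (∑ x ∈ S, ∑ u ∈ Sᶜ, (g x u : ℤ)) - ∑ x ∈ S, ∑ u ∈ Sᶜ, (g u x : ℤ) := by
  have h1 : ∑ x ∈ S, ((∑ u, (g x u : ℤ)) - ∑ u, (g u x : ℤ)) = flowValue g y := by
    rw [Finset.sum_eq_single_of_mem y hy]
    · rfl
    · intro x hxS hxy
      have hxz : x ≠ z := fun h => hz (h ▸ hxS)
      have hcon := hg.2 x hxy hxz
      have hcast : (∑ u, (g x u : ℤ)) = ∑ u, (g u x : ℤ) := by exact_mod_cast hcon.symm
      rw [hcast]; ring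
  rw [← h1]
  have h2 : ∀ x, (∑ u, (g x u : ℤ)) = (∑ u ∈ S, (g x u : ℤ)) + ∑ u ∈ Sᶜ, (g x u : ℤ) :=
    fun x => (Finset.sum_add_sum_compl S _).symm
  have h3 : ∀ x, (∑ u, (g u x : ℤ)) = (∑ u ∈ S, (g u x : ℤ)) + ∑ u ∈ Sᶜ, (g u x : ℤ) :=
    fun x => (Finset.sum_add_sum_compl S _).symm
  rw [Finset.sum_congr rfl fun x _ => by rw [h2 x, h3 x]]
  rw [Finset.sum_sub_distrib, Finset.sum_add_distrib, Finset.sum_add_distrib]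
  have h4 : (∑ x ∈ S, ∑ u ∈ S, (g x u : ℤ)) = ∑ x ∈ S, ∑ u ∈ S, (g u x : ℤ) :=
    Finset.sum_comm
  rw [h4]
  ring

end NetFlow

/-- if `f` is a non-maximum flow from `y` to `z`, then an augmenting path for
`f` exists, and for every augmenting path `σ`, `f + χ_σ` is a flow of value `v(f) + 1`. -/
theorem augmenting_path {V : Type*} [Fintype V] [DecidableEq V]
    (hV : 2 ≤ Fintype.card V) (N : Network V) (y z : V) (hyz : y ≠ z)
    (f : V → V → ℕ) (hf : NetFlow.IsFlow N y z f) (hnm : ¬ NetFlow.IsMaxFlow N y z f) :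
    (∃ (p : List V) (d : List Bool), NetFlow.IsAugPath N y z f p d) ∧
      ∀ (p : List V) (d : List Bool), NetFlow.IsAugPath N y z f p d →
        ∃ g : V → V → ℕ,
          (∀ u v : V, (g u v : ℤ) = (f u v : ℤ) + NetFlow.chiGen p d u v) ∧
          NetFlow.IsFlow N y z g ∧
          NetFlow.flowValue g y = NetFlow.flowValue f y + 1 := by
  classical
  have hcount_chi : True := trivial
  constructor
  · -- existence of an augmenting path
    by_contra hno
    push_neg at hno
    apply hnm
    set r : V → V → Prop := fun u v => f u v < N.c u v ∨ 1 ≤ f v u with hrdef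
    have hzS : ¬ Relation.ReflTransGen r y z := by
      intro hreach
      obtain ⟨p, hnd, hh, hl, hc⟩ := NetFlow.exists_nodup_chain hreach
      obtain ⟨q, t, rfl⟩ : ∃ q t, p = q :: t := by
        cases p
        · simp at hh
        · exact ⟨_, _, rfl⟩
      set d : List Bool :=
        (NetFlow.pathArcs (q :: t)).map fun a => decide (f a.1 a.2 < N.c a.1 a.2) with hddef
      have hzipmap : ((q :: t).zip (q :: t).tail).zip d =
          (NetFlow.pathArcs (q :: t)).map (fun a => (a, decide (f a.1 a.2 < N.c a.1 a.2))) :=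
        NetFlow.zip_map_self _ _
      have hq : q = y := by simpa using hh
      have htne : t ≠ [] := by
        rintro rfl
        simp at hl
        exact hyz (by rw [← hq, hl])
      have htpos : 0 < t.length := List.length_pos_iff.mpr htne
      refine hno (q :: t) d ⟨⟨by simp; omega, hnd, hh, hl, ?_⟩, ?_, ?_⟩
      · simp only [hddef, List.length_map, NetFlow.pathArcs, List.length_zip, List.tail_cons,
          List.length_cons]
        omega
      · intro a ha
        rw [NetFlow.forwardArcs, List.mem_filterMap] at ha
        obtain ⟨e, he, hesome⟩ := ha
        rw [hzipmap, List.mem_map] at he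
        obtain ⟨a0, ha0, rfl⟩ := he
        by_cases hdec : f a0.1 a0.2 < N.c a0.1 a0.2
        · simp [hdec] at hesome
          subst hesome
          exact hdec
        · simp [hdec] at hesome
      · intro a ha
        rw [NetFlow.backwardArcs, List.mem_filterMap] at ha
        obtain ⟨e, he, hesome⟩ := ha
        rw [hzipmap, List.mem_map] at he
        obtain ⟨a0, ha0, rfl⟩ := he
        by_cases hdec : f a0.1 a0.2 < N.c a0.1 a0.2
        · simp [hdec] at hesome
        · simp [hdec] at hesome
          subst hesome
          have hr0 : r a0.1 a0.2 := NetFlow.chain'_pathArcs hc a0 ha0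
          simp only [hrdef] at hr0
          rcases hr0 with h | h
          · exact absurd h hdec
          · exact h
    set S : Finset V := Finset.univ.filter (fun x => Relation.ReflTransGen r y x) with hSdef
    have hyS : y ∈ S := by
      simp only [hSdef, Finset.mem_filter, Finset.mem_univ, true_and]
      exact Relation.ReflTransGen.refl
    have hzS' : z ∉ S := by
      simp only [hSdef, Finset.mem_filter, Finset.mem_univ, true_and]
      exact hzS
    have hcross : ∀ x ∈ S, ∀ u, u ∉ S → f x u = N.c x u ∧ f u x = 0 := by
      intro x hx u hu
      have hnr : ¬ r x u := by
        intro hr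
        apply hu
        simp only [hSdef, Finset.mem_filter, Finset.mem_univ, true_and] at hx ⊢
        exact hx.tail hr
      simp only [hrdef] at hnr
      push_neg at hnr
      exact ⟨le_antisymm (hf.1 x u) hnr.1, by omega⟩
    set K : ℕ := ∑ x ∈ S, ∑ u ∈ Sᶜ, N.c x u with hKdef
    have hvf : NetFlow.flowValue f y = (K : ℤ) := by
      rw [NetFlow.flowValue_eq_cut N y z f hf S hyS hzS']
      have h1 : ∑ x ∈ S, ∑ u ∈ Sᶜ, (f x u : ℤ) = ∑ x ∈ S, ∑ u ∈ Sᶜ, (N.c x u : ℤ) :=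
        Finset.sum_congr rfl fun x hx => Finset.sum_congr rfl fun u hu => by
          rw [(hcross x hx u (by simpa using hu)).1]
      have h2 : ∑ x ∈ S, ∑ u ∈ Sᶜ, (f u x : ℤ) = 0 :=
        Finset.sum_eq_zero fun x hx => Finset.sum_eq_zero fun u hu => by
          rw [(hcross x hx u (by simpa using hu)).2]; simp
      rw [h1, h2, hKdef]
      push_cast
      ring
    have hub : ∀ m ∈ {m : ℕ | ∃ g, NetFlow.IsFlow N y z g ∧ NetFlow.flowValue g y = (m : ℤ)},
        m ≤ K := by
      rintro m ⟨g, hg, hvg⟩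
      have hcut := NetFlow.flowValue_eq_cut N y z g hg S hyS hzS'
      have t1 : ∑ x ∈ S, ∑ u ∈ Sᶜ, (g x u : ℤ) ≤ ∑ x ∈ S, ∑ u ∈ Sᶜ, (N.c x u : ℤ) :=
        Finset.sum_le_sum fun x _ => Finset.sum_le_sum fun u _ => by
          exact_mod_cast hg.1 x u
      have t2 : (0 : ℤ) ≤ ∑ x ∈ S, ∑ u ∈ Sᶜ, (g u x : ℤ) := by positivity
      have hle : NetFlow.flowValue g y ≤ (K : ℤ) := by
        rw [hcut, hKdef]
        push_cast
        linarith
      rw [hvg] at hle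
      exact_mod_cast hle
    have hmem : K ∈ {m : ℕ | ∃ g, NetFlow.IsFlow N y z g ∧ NetFlow.flowValue g y = (m : ℤ)} :=
      ⟨f, hf, hvf⟩
    have hmax : NetFlow.maxFlowValue N y z = K := by
      rw [NetFlow.maxFlowValue]
      exact le_antisymm (csSup_le ⟨K, hmem⟩ hub) (le_csSup ⟨K, hub⟩ hmem)
    exact ⟨hf, by rw [hmax, hvf]⟩
  · -- augmentation along any augmenting path
    rintro p d ⟨⟨hlen, hnd, hh, hl, hld⟩, hfa, hba⟩
    have hnonneg : ∀ u v, 0 ≤ (f u v : ℤ) + NetFlow.chiGen p d u v := by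
      intro u v
      by_cases hb : (u, v) ∈ NetFlow.backwardArcs p d
      · have h1 : 1 ≤ f u v := hba (u, v) hb
        have h2 := NetFlow.count_backwardArcs_le_one hnd d u v
        simp only [NetFlow.chiGen]
        omega
      · have h0 : (NetFlow.backwardArcs p d).count (u, v) = 0 := List.count_eq_zero.mpr hb
        simp only [NetFlow.chiGen, h0]
        omega
    set g : V → V → ℕ := fun u v => ((f u v : ℤ) + NetFlow.chiGen p d u v).toNat with hgdef
    have hcast : ∀ u v, (g u v : ℤ) = (f u v : ℤ) + NetFlow.chiGen p d u v := fun u v =>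
      Int.toNat_of_nonneg (hnonneg u v)
    obtain ⟨q, t, rfl⟩ : ∃ q t, p = q :: t := by
      cases p
      · simp at hh
      · exact ⟨_, _, rfl⟩
    have hq : q = y := by simpa using hh
    have htne : t ≠ [] := by
      rintro rfl
      simp at hlen
    refine ⟨g, hcast, ⟨?_, ?_⟩, ?_⟩
    · -- capacity constraint
      intro u v
      have hcap : (g u v : ℤ) ≤ (N.c u v : ℤ) := by
        rw [hcast]
        by_cases hfwd : 0 < NetFlow.chiGen (q :: t) d u v
        · have hmemf : (u, v) ∈ NetFlow.forwardArcs (q :: t) d := by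
            by_contra hmemf
            have h0 : (NetFlow.forwardArcs (q :: t) d).count (u, v) = 0 :=
              List.count_eq_zero.mpr hmemf
            simp only [NetFlow.chiGen, h0] at hfwd
            omega
          have hlt : f u v < N.c u v := hfa (u, v) hmemf
          have h1 := NetFlow.count_forwardArcs_le_one hnd d (u, v)
          simp only [NetFlow.chiGen] at hfwd ⊢
          omega
        · push_neg at hfwd
          have := hf.1 u v
          omega
      exact_mod_cast hcap
    · -- conservation
      intro x hxy hxz
      have hnet := NetFlow.sum_chiGen_net d (q :: t) hnd hld x
      have hiff : x ∈ (q :: t).dropLast ↔ x ∈ (q :: t).tail := by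
        constructor
        · intro hx
          have hxp : x ∈ q :: t := (List.dropLast_sublist _).mem hx
          rcases List.mem_cons.mp hxp with rfl | hxt
          · exact absurd hq hxy
          · exact hxt
        · intro hx
          have hxp : x ∈ q :: t := List.mem_cons_of_mem q hx
          have hne : q :: t ≠ [] := by simp
          have hlast : (q :: t).getLast hne = z := by
            have := List.getLast?_eq_getLast hne
            rw [hl] at this
            exact (Option.some.injEq _ _ ▸ this.symm : _)
          have hsplit := List.dropLast_append_getLast hne
          rw [hlast] at hsplit
          rw [← hsplit] at hxp
          rcases List.mem_append.mp hxp with h | h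
          · exact h
          · simp at h
            exact absurd h hxz
      have hzero : (∑ u, NetFlow.chiGen (q :: t) d x u) = ∑ u, NetFlow.chiGen (q :: t) d u x := by
        have h0 : (∑ u, NetFlow.chiGen (q :: t) d x u) - ∑ u, NetFlow.chiGen (q :: t) d u x = 0 := by
          rw [hnet]
          by_cases hx : x ∈ (q :: t).tail
          · rw [if_pos (hiff.mpr hx), if_pos hx]; ring
          · rw [if_neg (fun h => hx (hiff.mp h)), if_neg hx]; ring
        linarith
      have hconsf := hf.2 x hxy hxz
      have hcastf : (∑ u, (f u x : ℤ)) = ∑ u, (f x u : ℤ) := by exact_mod_cast hconsf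
      have hz2 : (∑ u, (g u x : ℤ)) = ∑ u, (g x u : ℤ) := by
        simp only [hcast]
        rw [Finset.sum_add_distrib, Finset.sum_add_distrib, hcastf, hzero]
      exact_mod_cast hz2
    · -- value increases by one
      have hnet := NetFlow.sum_chiGen_net d (q :: t) hnd hld y
      have hydl : y ∈ (q :: t).dropLast := by
        rw [List.dropLast_cons_of_ne_nil htne]
        exact hq ▸ (List.mem_cons_self : q ∈ q :: t.dropLast)
      have hyt : y ∉ (q :: t).tail := by
        simp only [List.tail_cons]
        intro hyt
        exact (List.nodup_cons.mp hnd).1 (hq ▸ hyt)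
      have hnet1 : (∑ u, NetFlow.chiGen (q :: t) d y u) - ∑ u, NetFlow.chiGen (q :: t) d u y = 1 := by
        rw [hnet, if_pos hydl, if_neg hyt]
        ring
      simp only [NetFlow.flowValue, hcast]
      rw [Finset.sum_add_distrib, Finset.sum_add_distrib]
      linarith [hnet1]
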